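/- Conversely, if Q = gcd(P,v,w) (monic gcd), then gcd(P²,w) = Q². -/

import Mathlib

open Polynomial

lemma gcd_sq_dvd (a b : Polynomial ℂ) : gcd (a ^ 2) (b ^ 2) ∣ gcd a b ^ 2 := by
  by_cases hg : gcd a b = 0
  · obtain ⟨ha, hb⟩ := (gcd_eq_zero_iff a b).mp hg
    simp [ha, hb]
  · set g0 := gcd a b with hg0
    have hn : normalize g0 = g0 := normalize_gcd a b
    obtain ⟨a', ha⟩ := gcd_dvd_left a b
    obtain ⟨b', hb⟩ := gcd_dvd_right a b
    rw [← hg0] at ha hb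
    have hcop : IsUnit (gcd a' b') := by
      have h1 : g0 = g0 * gcd a' b' := by
        nth_rewrite 1 [hg0, ha, hb]
        rw [gcd_mul_left, hn]
      have h2 : gcd a' b' = 1 := (mul_left_cancel₀ hg (h1.symm.trans (mul_one g0).symm))
      simp [h2]
    have hcop2 : IsUnit (gcd (a' ^ 2) (b' ^ 2)) := by
      rw [gcd_isUnit_iff] at hcop ⊢
      exact hcop.pow_left.pow_right
    have hn2 : normalize (g0 ^ 2) = g0 ^ 2 := by
      rw [sq, normalize_mul, hn]
    have key : gcd (a ^ 2) (b ^ 2) = g0 ^ 2 * gcd (a' ^ 2) (b' ^ 2) := by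
      rw [ha, hb, mul_pow, mul_pow, gcd_mul_left, hn2]
    rw [key]
    have := mul_dvd_mul_left (g0 ^ 2) (isUnit_iff_dvd_one.mp hcop2)
    rwa [mul_one] at this

/-- Lemma (Deg), converse of the second part: if `Q = gcd(P, v, w)` (monic gcd),
then `gcd(P², w) = Q²`. -/
theorem stmt_3
    (g : ℕ) (hg : 1 ≤ g) (h h' P u v w : Polynomial ℂ)
    (hhmon : h.Monic) (hhdeg : h.natDegree = 2 * g + 1)
    (hPmon : P.Monic) (hPdvd : P ^ 2 ∣ h)
    (hPmax : ∀ S : Polynomial ℂ, S.Monic → S ^ 2 ∣ h → S.natDegree ≤ P.natDegree)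
    (hh' : h = P ^ 2 * h')
    (humon : u.Monic) (hudeg : u.natDegree = g)
    (hwmon : w.Monic) (hwdeg : w.natDegree = g + 1)
    (hvdeg : v.degree ≤ ((g - 1 : ℕ) : WithBot ℕ))
    (heq : v ^ 2 + u * w = h)
    (hcop : gcd u (gcd v w) = 1)
    (Q : Polynomial ℂ) (hQ : Q = gcd P (gcd v w)) :
    gcd (P ^ 2) w = Q ^ 2 := by
  have hQP : Q ∣ P := hQ ▸ gcd_dvd_left _ _
  have hQvw : Q ∣ gcd v w := hQ ▸ gcd_dvd_right _ _
  have hQv : Q ∣ v := hQvw.trans (gcd_dvd_left _ _)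
  have hQw : Q ∣ w := hQvw.trans (gcd_dvd_right _ _)
  -- Q² divides h and v², hence u*w
  have hQ2h : Q ^ 2 ∣ h := (pow_dvd_pow_of_dvd hQP 2).trans hPdvd
  have hQ2v : Q ^ 2 ∣ v ^ 2 := pow_dvd_pow_of_dvd hQv 2
  have hQ2uw : Q ^ 2 ∣ u * w := by
    have : u * w = h - v ^ 2 := by rw [← heq]; ring
    rw [this]
    exact dvd_sub hQ2h hQ2v
  -- Q² is coprime to u
  have hcopQu : IsCoprime (Q ^ 2) u := by
    have h1 : gcd u Q ∣ (1 : Polynomial ℂ) := by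
      rw [← hcop]
      exact dvd_gcd (gcd_dvd_left _ _) ((gcd_dvd_right _ _).trans hQvw)
    have : IsCoprime u Q := (gcd_isUnit_iff u Q).mp (isUnit_of_dvd_one h1)
    exact this.symm.pow_left
  have hQ2w : Q ^ 2 ∣ w := hcopQu.dvd_of_dvd_mul_left hQ2uw
  -- forward direction
  have fwd : Q ^ 2 ∣ gcd (P ^ 2) w := dvd_gcd (pow_dvd_pow_of_dvd hQP 2) hQ2w
  -- backward direction
  set D := gcd (P ^ 2) w with hD
  have hDh : D ∣ h := (gcd_dvd_left _ _).trans (hh' ▸ dvd_mul_right _ h')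
  have hDuw : D ∣ u * w := (gcd_dvd_right (P ^ 2) w).mul_left u
  have hDv2 : D ∣ v ^ 2 := by
    have : v ^ 2 = h - u * w := by rw [← heq]; ring
    rw [this]
    exact dvd_sub hDh hDuw
  have hDw2 : D ∣ w ^ 2 := (gcd_dvd_right (P ^ 2) w).trans (dvd_pow_self w two_ne_zero)
  have bwd : D ∣ Q ^ 2 := by
    have h1 : D ∣ gcd (P ^ 2) (gcd (v ^ 2) (w ^ 2)) :=
      dvd_gcd (gcd_dvd_left _ _) (dvd_gcd hDv2 hDw2)
    have h2 : gcd (P ^ 2) (gcd (v ^ 2) (w ^ 2)) ∣ gcd (P ^ 2) (gcd v w ^ 2) :=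
      gcd_dvd_gcd dvd_rfl (gcd_sq_dvd v w)
    have h3 : gcd (P ^ 2) (gcd v w ^ 2) ∣ gcd P (gcd v w) ^ 2 := gcd_sq_dvd P (gcd v w)
    rw [hQ]
    exact h1.trans (h2.trans h3)
  refine dvd_antisymm_of_normalize_eq (normalize_gcd _ _) ?_ bwd fwd
  rw [hQ]
  rw [show ((gcd P (gcd v w)) ^ 2 : Polynomial ℂ) = normalize (gcd P (gcd v w)) ^ 2 by
    rw [normalize_gcd]]
  rw [sq, normalize_mul, normalize_idem]
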